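/- Under hypotheses (i), (ii), (iii), every face F of P_A — that is, every nonempty convex subset F ⊆ P_A that is extreme in P_A, meaning that whenever a point of F lies in the open segment between two points of P_A, both of those points belong to F — is of the form F = P_A ∩ V_I for some subset I ⊆ {1,…,n} with |I| = ℓ + dim(F) + 1, where dim(F) is the dimension of the affine span of F. -/

import Mathlib

open Module Submodule

namespace Stmt5

variable {n : ℕ}

/-- Coordinate subspace of functions vanishing off `J`. -/
def coordSub (J : Finset (Fin n)) : Submodule ℝ (Fin n → ℝ) where
  carrier := {x | ∀ j ∉ J, x j = 0}
  add_mem' := by intro x y hx hy j hj; simp [hx j hj, hy j hj]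
  zero_mem' := by intro j _; rfl
  smul_mem' := by intro c x hx j hj; simp [hx j hj]

lemma mem_coordSub {J : Finset (Fin n)} {x : Fin n → ℝ} :
    x ∈ coordSub J ↔ ∀ j ∉ J, x j = 0 := Iff.rfl

lemma coordSub_mono {J J' : Finset (Fin n)} (h : J ⊆ J') : coordSub J ≤ coordSub J' := by
  intro x hx j hj
  exact hx j fun hjJ => hj (h hjJ)

lemma finrank_coordSub (J : Finset (Fin n)) : finrank ℝ (coordSub J) = J.card := by
  classical
  let f : (J → ℝ) →ₗ[ℝ] coordSub J :=
    { toFun := fun y => ⟨fun j => if h : j ∈ J then y ⟨j, h⟩ else 0,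
        fun j hj => dif_neg hj⟩
      map_add' := by intro y z; ext j; by_cases h : j ∈ J <;> simp [h]
      map_smul' := by intro c y; ext j; by_cases h : j ∈ J <;> simp [h] }
  have hbij : Function.Bijective f := by
    constructor
    · intro y z hyz
      funext j
      have := congrArg (fun v : coordSub J => (v : Fin n → ℝ) j.1) hyz
      simpa [f, j.2] using this
    · rintro ⟨x, hx⟩
      refine ⟨fun j => x j.1, ?_⟩
      ext j
      by_cases h : j ∈ J
      · simp [f, h]
      · simp [f, h, hx j h]
  have := LinearEquiv.finrank_eq (LinearEquiv.ofBijective f hbij)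
  rw [← this]
  simp [finrank_pi]

lemma finrank_inf_ker_add {V : Type*} [AddCommGroup V] [Module ℝ V]
    (L : (Fin n → ℝ) →ₗ[ℝ] V) (p : Submodule ℝ (Fin n → ℝ)) :
    finrank ℝ ↥(LinearMap.ker L ⊓ p) + finrank ℝ ↥(p.map L) = finrank ℝ ↥p := by
  have h := LinearMap.finrank_range_add_finrank_ker (L ∘ₗ p.subtype)
  have hr : LinearMap.range (L ∘ₗ p.subtype) = p.map L := by
    rw [LinearMap.range_comp, Submodule.range_subtype]
  have hk : LinearMap.ker (L ∘ₗ p.subtype) = comap p.subtype (LinearMap.ker L ⊓ p) := by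
    rw [LinearMap.ker_comp]
    rw [Submodule.comap_inf, Submodule.comap_subtype_self]
    simp
  have he : finrank ℝ ↥(LinearMap.ker (L ∘ₗ p.subtype))
      = finrank ℝ ↥(LinearMap.ker L ⊓ p) := by
    rw [hk]
    exact LinearEquiv.finrank_eq (Submodule.comapSubtypeEquivOfLe inf_le_right)
  rw [hr, he] at h
  omega

variable {n : ℕ}

lemma coordSub_insert [DecidableEq (Fin n)] (j : Fin n) (J : Finset (Fin n)) :
    coordSub (insert j J) = coordSub J ⊔ span ℝ {(Pi.single j 1 : Fin n → ℝ)} := by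
  apply le_antisymm
  · intro x hx
    have hx1 : x - x j • (Pi.single j 1 : Fin n → ℝ) ∈ coordSub J := by
      intro k hk
      by_cases hkj : k = j
      · subst hkj; simp
      · have : k ∉ insert j J := by simp [hkj, hk]
        simp [Pi.single_apply, hkj, hx k this]
    have : x = (x - x j • (Pi.single j 1 : Fin n → ℝ)) + x j • (Pi.single j 1 : Fin n → ℝ) := by ring_nf
    rw [this]
    refine Submodule.add_mem _ ?_ ?_
    · exact le_sup_left (a := coordSub J) hx1
    · exact le_sup_right (b := span ℝ {(Pi.single j 1 : Fin n → ℝ)})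
        (smul_mem _ _ (subset_span rfl))
  · apply sup_le
    · exact coordSub_mono (Finset.subset_insert _ _)
    · rw [span_le, Set.singleton_subset_iff]
      intro k hk
      have : k ≠ j := by intro h; exact hk (by simp [h])
      simp [Pi.single_apply, this]

lemma exists_extend {V : Type*} [AddCommGroup V] [Module ℝ V] [FiniteDimensional ℝ V]
    (L : (Fin n → ℝ) →ₗ[ℝ] V) (hL : LinearMap.range L = ⊤) :
    ∀ (k : ℕ) (J : Finset (Fin n)),
      finrank ℝ ↥((coordSub J).map L) + k = finrank ℝ V →
      ∃ I : Finset (Fin n), J ⊆ I ∧ I.card = J.card + k ∧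
        (coordSub I).map L = ⊤ := by
  classical
  intro k
  induction k with
  | zero =>
    intro J hJ
    refine ⟨J, subset_rfl, by omega, ?_⟩
    apply Submodule.eq_top_of_finrank_eq
    omega
  | succ k ih =>
    intro J hJ
    set T := (coordSub J).map L with hT
    have hex : ∃ j, L ((Pi.single j 1 : Fin n → ℝ)) ∉ T := by
      by_contra hc
      push_neg at hc
      have hle : LinearMap.range L ≤ T := by
        rintro v ⟨x, rfl⟩
        have hx : x = ∑ j, x j • (Pi.single j 1 : Fin n → ℝ) := by
          funext k
          simp [Finset.sum_apply, Pi.single_apply]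
        rw [hx]
        rw [map_sum]
        apply Submodule.sum_mem
        intro j _
        rw [map_smul]
        exact Submodule.smul_mem _ _ (hc j)
      rw [hL] at hle
      have : finrank ℝ ↥T = finrank ℝ V := by
        rw [top_le_iff.mp hle]
        exact finrank_top ℝ V
      omega
    obtain ⟨j, hj⟩ := hex
    have hjJ : j ∉ J := by
      intro hjJ
      exact hj ⟨(Pi.single j 1 : Fin n → ℝ), fun k hk => Pi.single_eq_of_ne (fun h => hk (by rw [h]; exact hjJ)) 1, rfl⟩
    have hv0 : L ((Pi.single j 1 : Fin n → ℝ)) ≠ 0 := fun h => hj (h ▸ Submodule.zero_mem T)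
    have hinf : T ⊓ span ℝ {L ((Pi.single j 1 : Fin n → ℝ))} = ⊥ := by
      rw [eq_bot_iff]
      intro v hv
      rw [Submodule.mem_inf] at hv
      obtain ⟨hvT, hvs⟩ := hv
      rw [Submodule.mem_span_singleton] at hvs
      obtain ⟨a, rfl⟩ := hvs
      rcases eq_or_ne a 0 with h | h
      · simp [h]
      · exact absurd (by simpa [h] using Submodule.smul_mem T a⁻¹ hvT) hj
    have hmap : (coordSub (insert j J)).map L = T ⊔ span ℝ {L ((Pi.single j 1 : Fin n → ℝ))} := by
      rw [coordSub_insert, Submodule.map_sup, Submodule.map_span, Set.image_singleton]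
    have hrank : finrank ℝ ↥((coordSub (insert j J)).map L) = finrank ℝ ↥T + 1 := by
      rw [hmap]
      have := Submodule.finrank_sup_add_finrank_inf_eq T (span ℝ {L ((Pi.single j 1 : Fin n → ℝ))})
      rw [hinf, finrank_bot, finrank_span_singleton hv0] at this
      omega
    obtain ⟨I, hJI, hcard, htop⟩ := ih (insert j J) (by omega)
    exact ⟨I, (Finset.subset_insert j J).trans hJI, by
      rw [hcard, Finset.card_insert_of_notMem hjJ]; omega, htop⟩

end Stmt5

/- STATEMENT 5: Under hypotheses (i), (ii), (iii), every face `F` of `P_A` (a nonempty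
convex extreme subset of `P_A`) is of the form `P_A ∩ V_I` for some index set `I` with
`|I| = ℓ + dim F + 1`, where `dim F` is the dimension of the affine span of `F`. -/
set_option maxHeartbeats 2000000 in
open Stmt5 Module Submodule in
theorem stmt_5 (ℓ n : ℕ) (hℓ : 1 ≤ ℓ) (hn : ℓ ≤ n)
    (A : Matrix (Fin ℓ) (Fin n) ℤ)
    (hi : ∃ x ∈ ({x : Fin n → ℝ | ∀ i, ∑ j, (A i j : ℝ) * x j = 0} ∩ stdSimplex ℝ (Fin n)),
        ∀ j, 0 < x j)
    (hii : (A.map (Int.cast : ℤ → ℝ)).rank = ℓ)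
    (hiii : ∀ j, ∃ i, A i j ≠ 0)
    (F : Set (Fin n → ℝ)) (hne : F.Nonempty) (hconv : Convex ℝ F)
    (hext : IsExtreme ℝ
      ({x : Fin n → ℝ | ∀ i, ∑ j, (A i j : ℝ) * x j = 0} ∩ stdSimplex ℝ (Fin n)) F) :
    ∃ I : Finset (Fin n),
      F = ({x : Fin n → ℝ | ∀ i, ∑ j, (A i j : ℝ) * x j = 0} ∩ stdSimplex ℝ (Fin n))
          ∩ {x : Fin n → ℝ | ∀ j ∉ I, x j = 0} ∧
      I.card = ℓ + Module.finrank ℝ (vectorSpan ℝ F) + 1 := by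
  classical
  set P : Set (Fin n → ℝ) :=
    {x : Fin n → ℝ | ∀ i, ∑ j, (A i j : ℝ) * x j = 0} ∩ stdSimplex ℝ (Fin n) with hPdef
  -- the linear map
  let s : (Fin n → ℝ) →ₗ[ℝ] ℝ :=
    { toFun := fun x => ∑ j, x j
      map_add' := by intro x y; simp [Finset.sum_add_distrib]
      map_smul' := by intro c x; simp [Finset.mul_sum] }
  let M := (A.map (Int.cast : ℤ → ℝ)).mulVecLin
  let L : (Fin n → ℝ) →ₗ[ℝ] (Fin ℓ → ℝ) × ℝ := LinearMap.prod M s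
  have hMapp : ∀ (x : Fin n → ℝ) (i : Fin ℓ), M x i = ∑ j, (A i j : ℝ) * x j := by
    intro x i
    simp [M, Matrix.mulVecLin_apply, Matrix.mulVec, dotProduct, Matrix.map_apply]
  have hmem : ∀ x : Fin n → ℝ, x ∈ P ↔ (L x = (0, 1) ∧ ∀ j, 0 ≤ x j) := by
    intro x
    constructor
    · rintro ⟨h1, h2, h3⟩
      refine ⟨Prod.ext ?_ ?_, h2⟩
      · funext i; show M x i = 0; rw [hMapp]; exact h1 i
      · show s x = 1; exact h3
    · rintro ⟨h1, h2⟩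
      have hM : M x = 0 := congrArg Prod.fst h1
      have hs : s x = 1 := congrArg Prod.snd h1
      exact ⟨fun i => by rw [← hMapp x i, hM]; rfl, h2, hs⟩
  obtain ⟨p, hpP, hppos⟩ := hi
  have hpL : L p = (0, 1) := ((hmem p).mp hpP).1
  have hMp : M p = 0 := congrArg Prod.fst hpL
  have hsp : s p = 1 := congrArg Prod.snd hpL
  -- surjectivity of L
  have hMtop : LinearMap.range M = ⊤ := by
    apply Submodule.eq_top_of_finrank_eq
    rw [show finrank ℝ ↥(LinearMap.range M) = (A.map (Int.cast : ℤ → ℝ)).rank from rfl, hii]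
    simp [finrank_pi]
  have hLtop : LinearMap.range L = ⊤ := by
    rw [LinearMap.range_eq_top]
    rintro ⟨y, t⟩
    obtain ⟨u, hu⟩ : ∃ u, M u = y := by
      have : y ∈ LinearMap.range M := hMtop ▸ Submodule.mem_top
      exact this
    refine ⟨u + (t - s u) • p, ?_⟩
    have : L (u + (t - s u) • p) = L u + (t - s u) • L p := by
      rw [map_add, map_smul]
    rw [this, hpL]
    have hLu : L u = (M u, s u) := rfl
    rw [hLu, hu]
    ext
    · simp
    · simp
  -- support of F
  set I0 : Finset (Fin n) := Finset.univ.filter (fun j => ∃ x ∈ F, x j ≠ 0) with hI0def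
  have hF0 : ∀ x ∈ F, ∀ j ∉ I0, x j = 0 := by
    intro x hx j hj
    by_contra h
    exact hj (by simp [hI0def]; exact ⟨x, hx, h⟩)
  have hFP : F ⊆ P := hext.1
  have hPnn : ∀ x ∈ P, ∀ j, 0 ≤ x j := fun x hx => ((hmem x).mp hx).2
  have hPs1 : ∀ x ∈ P, ∀ j, x j ≤ 1 := by
    intro x hx j
    have h1 : s x = 1 := congrArg Prod.snd ((hmem x).mp hx).1
    have : ∑ k, x k = 1 := h1
    calc x j ≤ ∑ k, x k := Finset.single_le_sum (fun k _ => hPnn x hx k) (Finset.mem_univ j)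
    _ = 1 := this
  -- an interior-like point y of F
  have hchoose : ∀ j ∈ I0, ∃ x, x ∈ F ∧ x j ≠ 0 := by
    intro j hj
    simp only [hI0def, Finset.mem_filter, Finset.mem_univ, true_and] at hj
    obtain ⟨x, hx1, hx2⟩ := hj
    exact ⟨x, hx1, hx2⟩
  choose! w hwF hwne using hchoose
  have hI0ne : I0.Nonempty := by
    obtain ⟨x0, hx0⟩ := hne
    have h1 : s x0 = 1 := congrArg Prod.snd ((hmem x0).mp (hFP hx0)).1
    have : ∃ j, x0 j ≠ 0 := by
      by_contra h
      push_neg at h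
      have : s x0 = 0 := by simp [s, h]
      rw [h1] at this
      norm_num at this
    obtain ⟨j, hj⟩ := this
    exact ⟨j, by simp [hI0def]; exact ⟨x0, hx0, hj⟩⟩
  set y : Fin n → ℝ := ∑ j ∈ I0, ((I0.card : ℝ))⁻¹ • w j with hydef
  have hcardpos : (0:ℝ) < (I0.card : ℝ) := by
    exact_mod_cast Finset.card_pos.mpr hI0ne
  have hyF : y ∈ F := by
    apply hconv.sum_mem
    · intro j _; positivity
    · rw [Finset.sum_const, nsmul_eq_mul]
      field_simp
    · intro j hj; exact hwF j hj
  have hyapp : ∀ k, y k = ∑ j ∈ I0, ((I0.card : ℝ))⁻¹ * w j k := by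
    intro k
    rw [hydef]
    simp [Finset.sum_apply]
  have hypos : ∀ j ∈ I0, 0 < y j := by
    intro j hj
    rw [hyapp]
    apply Finset.sum_pos'
    · intro k hk
      have := hPnn _ (hFP (hwF k hk)) j
      positivity
    · refine ⟨j, hj, ?_⟩
      have h0 : 0 ≤ w j j := hPnn _ (hFP (hwF j hj)) j
      have hne' := hwne j hj
      have : 0 < w j j := lt_of_le_of_ne h0 (Ne.symm hne')
      positivity
  have hy0 : ∀ j ∉ I0, y j = 0 := hF0 y hyF
  have hyL : L y = (0, 1) := ((hmem y).mp (hFP hyF)).1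
  -- the minimum value
  set m : ℝ := I0.inf' hI0ne y with hmdef
  have hm : 0 < m := by
    rw [hmdef, Finset.lt_inf'_iff]
    exact hypos
  have hmle : ∀ j ∈ I0, m ≤ y j := fun j hj => Finset.inf'_le _ hj
  -- F is the face P ∩ V_{I0}
  have hface : P ∩ {x | ∀ j ∉ I0, x j = 0} = F := by
    apply Set.Subset.antisymm
    · rintro x ⟨hxP, hx0⟩
      set z : Fin n → ℝ := y + m • (y - x) with hzdef
      have hxL : L x = (0, 1) := ((hmem x).mp hxP).1
      have hzP : z ∈ P := by
        rw [hmem]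
        constructor
        · rw [hzdef, map_add, map_smul, map_sub, hyL, hxL]
          simp
        · intro j
          by_cases hj : j ∈ I0
          · have h1 : m ≤ y j := hmle j hj
            have h2 : x j ≤ 1 := hPs1 x hxP j
            have h3 : 0 ≤ x j := hPnn x hxP j
            have : z j = y j + m * (y j - x j) := rfl
            rw [this]
            nlinarith
          · have h1 : y j = 0 := hy0 j hj
            have h2 : x j = 0 := hx0 j hj
            have : z j = y j + m * (y j - x j) := rfl
            rw [this, h1, h2]
            ring_nf
            exact le_refl 0
      have hseg : y ∈ openSegment ℝ x z := by
        refine ⟨m / (1 + m), 1 / (1 + m), by positivity, by positivity, ?_, ?_⟩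
        · field_simp
          ring
        · funext j
          have : z j = y j + m * (y j - x j) := rfl
          show m / (1 + m) * x j + 1 / (1 + m) * z j = y j
          rw [this]
          field_simp
          ring
      exact hext.2 hxP hzP hyF hseg
    · intro x hxF
      exact ⟨hFP hxF, fun j hj => hF0 x hxF j hj⟩
  -- vector span of F
  set K : Submodule ℝ (Fin n → ℝ) := LinearMap.ker L with hKdef
  have hvs : vectorSpan ℝ F = K ⊓ coordSub I0 := by
    apply le_antisymm
    · rw [vectorSpan_def, Submodule.span_le]
      rintro v ⟨a, ha, b, hb, rfl⟩
      have haL : L a = (0, 1) := ((hmem a).mp (hFP ha)).1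
      have hbL : L b = (0, 1) := ((hmem b).mp (hFP hb)).1
      refine Submodule.mem_inf.mpr ⟨?_, ?_⟩
      · rw [hKdef, LinearMap.mem_ker]
        show L (a - b) = 0
        rw [map_sub, haL, hbL, sub_self]
      · intro j hj
        show a j - b j = 0
        rw [hF0 a ha j hj, hF0 b hb j hj, sub_self]
    · intro v hv
      obtain ⟨hvK, hv0⟩ := Submodule.mem_inf.mp hv
      set c : ℝ := 1 + ∑ j, |v j| with hcdef
      have habs : ∀ j, |v j| ≤ c - 1 := by
        intro j
        have : |v j| ≤ ∑ k, |v k| :=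
          Finset.single_le_sum (fun k _ => abs_nonneg (v k)) (Finset.mem_univ j)
        rw [hcdef]; linarith
      have hc : (1:ℝ) ≤ c := by
        have : (0:ℝ) ≤ ∑ j, |v j| := Finset.sum_nonneg fun j _ => abs_nonneg _
        rw [hcdef]; linarith
      set ε : ℝ := m / c with hεdef
      have hε : 0 < ε := by positivity
      have hvL : L v = 0 := hvK
      have hywF : y + ε • v ∈ F := by
        rw [← hface]
        refine ⟨?_, ?_⟩
        · rw [hmem]
          constructor
          · rw [map_add, map_smul, hyL, hvL, smul_zero, add_zero]
          · intro j
            by_cases hj : j ∈ I0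
            · have h1 : m ≤ y j := hmle j hj
              have h2 : |v j| ≤ c - 1 := habs j
              have h3 : -(c - 1) ≤ v j := neg_le_of_abs_le h2
              have h4 : ε * (c - 1) < m := by
                rw [hεdef]
                rw [div_mul_eq_mul_div, div_lt_iff₀ (by linarith)]
                nlinarith
              have : (y + ε • v) j = y j + ε * v j := by simp
              rw [this]
              nlinarith
            · have h1 : y j = 0 := hy0 j hj
              have h2 : v j = 0 := hv0 j hj
              have : (y + ε • v) j = y j + ε * v j := by simp
              rw [this, h1, h2]
              simp
        · intro j hj
          have h1 : y j = 0 := hy0 j hj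
          have h2 : v j = 0 := hv0 j hj
          show y j + ε * v j = 0
          rw [h1, h2]; ring
      have hveq : v = ε⁻¹ • ((y + ε • v) -ᵥ y) := by
        funext j
        show v j = ε⁻¹ * (y j + ε * v j - y j)
        field_simp
        ring
      rw [hveq]
      exact Submodule.smul_mem _ _ (vsub_mem_vectorSpan ℝ hywF hyF)
  -- rank-nullity and extension
  have hdimV : finrank ℝ ((Fin ℓ → ℝ) × ℝ) = ℓ + 1 := by
    rw [Module.finrank_prod, finrank_pi, Module.finrank_self]
    simp
  have hrn0 := finrank_inf_ker_add L (coordSub I0)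
  rw [finrank_coordSub, ← hKdef] at hrn0
  have hr0le : finrank ℝ ↥((coordSub I0).map L) ≤ ℓ + 1 := by
    rw [← hdimV]
    exact Submodule.finrank_le _
  obtain ⟨I, hI0I, hcard, htop⟩ :=
    exists_extend L hLtop (ℓ + 1 - finrank ℝ ↥((coordSub I0).map L)) I0 (by omega)
  have hrnI := finrank_inf_ker_add L (coordSub I)
  rw [finrank_coordSub, ← hKdef] at hrnI
  have hmapI : finrank ℝ ↥((coordSub I).map L) = ℓ + 1 := by
    rw [htop, finrank_top]
    exact hdimV
  rw [hmapI] at hrnI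
  have hWle : K ⊓ coordSub I0 ≤ K ⊓ coordSub I :=
    inf_le_inf_left _ (coordSub_mono hI0I)
  have hWeq : K ⊓ coordSub I0 = K ⊓ coordSub I := by
    apply Submodule.eq_of_le_of_finrank_eq hWle
    omega
  refine ⟨I, ?_, ?_⟩
  · apply Set.Subset.antisymm
    · intro x hxF
      exact ⟨hFP hxF, fun j hj => hF0 x hxF j (fun h => hj (hI0I h))⟩
    · rintro x ⟨hxP, hxI⟩
      rw [← hface]
      refine ⟨hxP, fun j hj => ?_⟩
      have hxy : x - y ∈ K ⊓ coordSub I := by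
        refine Submodule.mem_inf.mpr ⟨?_, ?_⟩
        · rw [hKdef, LinearMap.mem_ker, map_sub, ((hmem x).mp hxP).1, hyL, sub_self]
        · intro k hk
          show x k - y k = 0
          rw [hxI k hk, hy0 k (fun h => hk (hI0I h)), sub_self]
      rw [← hWeq] at hxy
      have h1 : x j - y j = 0 := hxy.2 j hj
      have h2 : y j = 0 := hy0 j hj
      linarith
  · rw [hvs]
    omega
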